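/- Let k_C(x) = 1/(2x·sinh(πx/2)) for x > 0, and for a function f on (0,∞) define (Df)(x) := −d/dx (x·f(x)), with Dⁿ its n-fold iterate. Then (D⁴k_C)(2) < 0; in particular D⁴k_C is not nonnegative on (0, ∞). -/

import Mathlib

set_option maxHeartbeats 1000000

open Real

/-- The operator `D` acting on functions on `(0,∞)`: `(Df)(x) = −d/dx (x·f(x))`. -/
noncomputable def DOp (f : ℝ → ℝ) : ℝ → ℝ := fun x => -deriv (fun y => y * f y) x

private lemma HDcd {f : ℝ → ℝ} {a b x : ℝ} (h : HasDerivAt f a x) (hab : a = b) :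
    HasDerivAt f b x := hab ▸ h

private lemma hS (x : ℝ) :
    HasDerivAt (fun y : ℝ => Real.sinh (π * y / 2)) (π / 2 * Real.cosh (π * x / 2)) x := by
  have h : HasDerivAt (fun y : ℝ => π * y / 2) (π / 2) x :=
    HDcd (((hasDerivAt_id x).const_mul π).div_const 2) (by push_cast [id_eq]; ring)
  exact HDcd h.sinh (by push_cast [id_eq]; ring)

private lemma hC (x : ℝ) :
    HasDerivAt (fun y : ℝ => Real.cosh (π * y / 2)) (π / 2 * Real.sinh (π * x / 2)) x := by
  have h : HasDerivAt (fun y : ℝ => π * y / 2) (π / 2) x :=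
    HDcd (((hasDerivAt_id x).const_mul π).div_const 2) (by push_cast [id_eq]; ring)
  exact HDcd h.cosh (by push_cast [id_eq]; ring)

noncomputable def F1 : ℝ → ℝ := fun x =>
  π * Real.cosh (π * x / 2) / (4 * Real.sinh (π * x / 2) ^ 2)

noncomputable def F2 : ℝ → ℝ := fun x =>
  π * (π * x * Real.cosh (π * x / 2) ^ 2 - π * x / 2 * Real.sinh (π * x / 2) ^ 2
      - Real.cosh (π * x / 2) * Real.sinh (π * x / 2)) / (4 * Real.sinh (π * x / 2) ^ 3)

noncomputable def F3 : ℝ → ℝ := fun x =>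
  π * (3 * π ^ 2 / 2 * x ^ 2 * Real.cosh (π * x / 2) ^ 3
      - 5 * π ^ 2 / 4 * x ^ 2 * Real.cosh (π * x / 2) * Real.sinh (π * x / 2) ^ 2
      - 3 * π * x * Real.cosh (π * x / 2) ^ 2 * Real.sinh (π * x / 2)
      + 3 * π / 2 * x * Real.sinh (π * x / 2) ^ 3
      + Real.cosh (π * x / 2) * Real.sinh (π * x / 2) ^ 2) / (4 * Real.sinh (π * x / 2) ^ 4)

noncomputable def F4 : ℝ → ℝ := fun x =>
  π * (3 * π ^ 3 * x ^ 3 * Real.cosh (π * x / 2) ^ 4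
      - 7 * π ^ 3 / 2 * x ^ 3 * Real.cosh (π * x / 2) ^ 2 * Real.sinh (π * x / 2) ^ 2
      + 5 * π ^ 3 / 8 * x ^ 3 * Real.sinh (π * x / 2) ^ 4
      - 9 * π ^ 2 * x ^ 2 * Real.cosh (π * x / 2) ^ 3 * Real.sinh (π * x / 2)
      + 15 * π ^ 2 / 2 * x ^ 2 * Real.cosh (π * x / 2) * Real.sinh (π * x / 2) ^ 3
      + 7 * π * x * Real.cosh (π * x / 2) ^ 2 * Real.sinh (π * x / 2) ^ 2
      - 7 * π / 2 * x * Real.sinh (π * x / 2) ^ 4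
      - Real.cosh (π * x / 2) * Real.sinh (π * x / 2) ^ 3) / (4 * Real.sinh (π * x / 2) ^ 5)

private lemma DOp_congr {f F : ℝ → ℝ} (hfF : ∀ y, 0 < y → f y = F y) {x : ℝ} (hx : 0 < x) :
    DOp f x = DOp F x := by
  unfold DOp
  have hev : (fun y => y * f y) =ᶠ[nhds x] (fun y => y * F y) := by
    filter_upwards [isOpen_Ioi.mem_nhds (show x ∈ Set.Ioi 0 from hx)] with y hy
    rw [hfF y hy]
  rw [hev.deriv_eq]

private lemma stage1 : ∀ x : ℝ, 0 < x →
    DOp (fun y : ℝ => 1 / (2 * y * Real.sinh (π * y / 2))) x = F1 x := by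
  intro x hx
  have hs0 : 0 < Real.sinh (π * x / 2) :=
    Real.sinh_pos_iff.mpr (div_pos (mul_pos Real.pi_pos hx) two_pos)
  have hsne : Real.sinh (π * x / 2) ≠ 0 := ne_of_gt hs0
  have hxne : x ≠ 0 := ne_of_gt hx
  have htop : HasDerivAt (fun y : ℝ => y) (1 : ℝ) x := hasDerivAt_id x
  have hbot : HasDerivAt (fun y : ℝ => 2 * y * Real.sinh (π * y / 2))
      (2 * Real.sinh (π * x / 2) + π * x * Real.cosh (π * x / 2)) x :=
    HDcd (((hasDerivAt_id x).const_mul 2).mul (hS x)) (by push_cast [id_eq]; ring)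
  have hbne : 2 * x * Real.sinh (π * x / 2) ≠ 0 :=
    ne_of_gt (mul_pos (mul_pos two_pos hx) hs0)
  have hkey : deriv (fun y : ℝ => y / (2 * y * Real.sinh (π * y / 2))) x
      = (1 * (2 * x * Real.sinh (π * x / 2))
          - x * (2 * Real.sinh (π * x / 2) + π * x * Real.cosh (π * x / 2)))
        / (2 * x * Real.sinh (π * x / 2)) ^ 2 := (htop.div hbot hbne).deriv
  unfold DOp
  show -deriv (fun y : ℝ => y * (1 / (2 * y * Real.sinh (π * y / 2)))) x = F1 x
  rw [show (fun y : ℝ => y * (1 / (2 * y * Real.sinh (π * y / 2))))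
        = fun y : ℝ => y / (2 * y * Real.sinh (π * y / 2)) from funext fun y => by ring,
      hkey]
  simp only [F1]
  field_simp
  ring

private lemma stage2 : ∀ x : ℝ, 0 < x → DOp F1 x = F2 x := by
  intro x hx
  have hs0 : 0 < Real.sinh (π * x / 2) :=
    Real.sinh_pos_iff.mpr (div_pos (mul_pos Real.pi_pos hx) two_pos)
  have hsne : Real.sinh (π * x / 2) ≠ 0 := ne_of_gt hs0
  have htop : HasDerivAt (fun y : ℝ => y * (π * Real.cosh (π * y / 2)))
      (π * Real.cosh (π * x / 2) + π ^ 2 * x / 2 * Real.sinh (π * x / 2)) x :=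
    HDcd ((hasDerivAt_id x).mul ((hC x).const_mul π)) (by push_cast [id_eq]; ring)
  have hbot : HasDerivAt (fun y : ℝ => 4 * Real.sinh (π * y / 2) ^ 2)
      (4 * π * Real.sinh (π * x / 2) * Real.cosh (π * x / 2)) x :=
    HDcd (((hS x).pow 2).const_mul 4) (by push_cast [id_eq]; ring)
  have hbne : 4 * Real.sinh (π * x / 2) ^ 2 ≠ 0 :=
    ne_of_gt (mul_pos (by norm_num) (pow_pos hs0 2))
  have hkey : deriv (fun y : ℝ =>
        y * (π * Real.cosh (π * y / 2)) / (4 * Real.sinh (π * y / 2) ^ 2)) x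
      = ((π * Real.cosh (π * x / 2) + π ^ 2 * x / 2 * Real.sinh (π * x / 2))
            * (4 * Real.sinh (π * x / 2) ^ 2)
          - x * (π * Real.cosh (π * x / 2))
            * (4 * π * Real.sinh (π * x / 2) * Real.cosh (π * x / 2)))
        / (4 * Real.sinh (π * x / 2) ^ 2) ^ 2 := (htop.div hbot hbne).deriv
  unfold DOp
  show -deriv (fun y : ℝ => y * F1 y) x = F2 x
  rw [show (fun y : ℝ => y * F1 y)
        = fun y : ℝ => y * (π * Real.cosh (π * y / 2)) / (4 * Real.sinh (π * y / 2) ^ 2) from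
      funext fun y => by simp only [F1]; ring, hkey]
  simp only [F2]
  field_simp
  ring

private lemma stage3 : ∀ x : ℝ, 0 < x → DOp F2 x = F3 x := by
  intro x hx
  have hs0 : 0 < Real.sinh (π * x / 2) :=
    Real.sinh_pos_iff.mpr (div_pos (mul_pos Real.pi_pos hx) two_pos)
  have hsne : Real.sinh (π * x / 2) ≠ 0 := ne_of_gt hs0
  have htop : HasDerivAt (fun y : ℝ =>
        y * (π * (π * y * Real.cosh (π * y / 2) ^ 2 - π * y / 2 * Real.sinh (π * y / 2) ^ 2
          - Real.cosh (π * y / 2) * Real.sinh (π * y / 2))))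
      (π * (3 * π / 2 * x * Real.cosh (π * x / 2) ^ 2 - 3 * π / 2 * x * Real.sinh (π * x / 2) ^ 2
          + π ^ 2 / 2 * x ^ 2 * Real.cosh (π * x / 2) * Real.sinh (π * x / 2)
          - Real.cosh (π * x / 2) * Real.sinh (π * x / 2))) x :=
    HDcd ((hasDerivAt_id x).mul
      (((((((hasDerivAt_id x).const_mul π).mul ((hC x).pow 2)).sub
          ((((hasDerivAt_id x).const_mul π).div_const 2).mul ((hS x).pow 2))).sub
          ((hC x).mul (hS x)))).const_mul π)) (by push_cast [id_eq, Pi.pow_apply, Pi.mul_apply]; ring)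
  have hbot : HasDerivAt (fun y : ℝ => 4 * Real.sinh (π * y / 2) ^ 3)
      (6 * π * Real.sinh (π * x / 2) ^ 2 * Real.cosh (π * x / 2)) x :=
    HDcd (((hS x).pow 3).const_mul 4) (by push_cast [id_eq]; ring)
  have hbne : 4 * Real.sinh (π * x / 2) ^ 3 ≠ 0 :=
    ne_of_gt (mul_pos (by norm_num) (pow_pos hs0 3))
  have hkey : deriv (fun y : ℝ =>
        y * (π * (π * y * Real.cosh (π * y / 2) ^ 2 - π * y / 2 * Real.sinh (π * y / 2) ^ 2
          - Real.cosh (π * y / 2) * Real.sinh (π * y / 2)))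
          / (4 * Real.sinh (π * y / 2) ^ 3)) x
      = ((π * (3 * π / 2 * x * Real.cosh (π * x / 2) ^ 2
              - 3 * π / 2 * x * Real.sinh (π * x / 2) ^ 2
              + π ^ 2 / 2 * x ^ 2 * Real.cosh (π * x / 2) * Real.sinh (π * x / 2)
              - Real.cosh (π * x / 2) * Real.sinh (π * x / 2)))
            * (4 * Real.sinh (π * x / 2) ^ 3)
          - x * (π * (π * x * Real.cosh (π * x / 2) ^ 2
              - π * x / 2 * Real.sinh (π * x / 2) ^ 2
              - Real.cosh (π * x / 2) * Real.sinh (π * x / 2)))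
            * (6 * π * Real.sinh (π * x / 2) ^ 2 * Real.cosh (π * x / 2)))
        / (4 * Real.sinh (π * x / 2) ^ 3) ^ 2 := (htop.div hbot hbne).deriv
  unfold DOp
  show -deriv (fun y : ℝ => y * F2 y) x = F3 x
  rw [show (fun y : ℝ => y * F2 y)
        = fun y : ℝ =>
          y * (π * (π * y * Real.cosh (π * y / 2) ^ 2 - π * y / 2 * Real.sinh (π * y / 2) ^ 2
            - Real.cosh (π * y / 2) * Real.sinh (π * y / 2)))
            / (4 * Real.sinh (π * y / 2) ^ 3) from
      funext fun y => by simp only [F2]; ring, hkey]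
  simp only [F3]
  field_simp
  ring

private lemma stage4 : ∀ x : ℝ, 0 < x → DOp F3 x = F4 x := by
  intro x hx
  have hs0 : 0 < Real.sinh (π * x / 2) :=
    Real.sinh_pos_iff.mpr (div_pos (mul_pos Real.pi_pos hx) two_pos)
  have hsne : Real.sinh (π * x / 2) ≠ 0 := ne_of_gt hs0
  have htop : HasDerivAt (fun y : ℝ =>
        y * (π * (3 * π ^ 2 / 2 * y ^ 2 * Real.cosh (π * y / 2) ^ 3
          - 5 * π ^ 2 / 4 * y ^ 2 * Real.cosh (π * y / 2) * Real.sinh (π * y / 2) ^ 2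
          - 3 * π * y * Real.cosh (π * y / 2) ^ 2 * Real.sinh (π * y / 2)
          + 3 * π / 2 * y * Real.sinh (π * y / 2) ^ 3
          + Real.cosh (π * y / 2) * Real.sinh (π * y / 2) ^ 2)))
      (π * (3 * π ^ 2 * x ^ 2 * Real.cosh (π * x / 2) ^ 3
          + π ^ 3 * x ^ 3 * Real.cosh (π * x / 2) ^ 2 * Real.sinh (π * x / 2)
          - 5 * π ^ 3 / 8 * x ^ 3 * Real.sinh (π * x / 2) ^ 3
          - 9 * π ^ 2 / 2 * x ^ 2 * Real.cosh (π * x / 2) * Real.sinh (π * x / 2) ^ 2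
          - 5 * π * x * Real.cosh (π * x / 2) ^ 2 * Real.sinh (π * x / 2)
          + 7 * π / 2 * x * Real.sinh (π * x / 2) ^ 3
          + Real.cosh (π * x / 2) * Real.sinh (π * x / 2) ^ 2)) x :=
    HDcd ((hasDerivAt_id x).mul
      ((((((((((hasDerivAt_id x).pow 2).const_mul (3 * π ^ 2 / 2)).mul ((hC x).pow 3)).sub
        (((((hasDerivAt_id x).pow 2).const_mul (5 * π ^ 2 / 4)).mul (hC x)).mul
          ((hS x).pow 2))).sub
        ((((hasDerivAt_id x).const_mul (3 * π)).mul ((hC x).pow 2)).mul (hS x))).add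
        (((hasDerivAt_id x).const_mul (3 * π / 2)).mul ((hS x).pow 3))).add
        ((hC x).mul ((hS x).pow 2)))).const_mul π)) (by push_cast [id_eq, Pi.pow_apply, Pi.mul_apply]; ring)
  have hbot : HasDerivAt (fun y : ℝ => 4 * Real.sinh (π * y / 2) ^ 4)
      (8 * π * Real.sinh (π * x / 2) ^ 3 * Real.cosh (π * x / 2)) x :=
    HDcd (((hS x).pow 4).const_mul 4) (by push_cast [id_eq]; ring)
  have hbne : 4 * Real.sinh (π * x / 2) ^ 4 ≠ 0 :=
    ne_of_gt (mul_pos (by norm_num) (pow_pos hs0 4))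
  have hkey : deriv (fun y : ℝ =>
        y * (π * (3 * π ^ 2 / 2 * y ^ 2 * Real.cosh (π * y / 2) ^ 3
          - 5 * π ^ 2 / 4 * y ^ 2 * Real.cosh (π * y / 2) * Real.sinh (π * y / 2) ^ 2
          - 3 * π * y * Real.cosh (π * y / 2) ^ 2 * Real.sinh (π * y / 2)
          + 3 * π / 2 * y * Real.sinh (π * y / 2) ^ 3
          + Real.cosh (π * y / 2) * Real.sinh (π * y / 2) ^ 2))
          / (4 * Real.sinh (π * y / 2) ^ 4)) x
      = ((π * (3 * π ^ 2 * x ^ 2 * Real.cosh (π * x / 2) ^ 3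
              + π ^ 3 * x ^ 3 * Real.cosh (π * x / 2) ^ 2 * Real.sinh (π * x / 2)
              - 5 * π ^ 3 / 8 * x ^ 3 * Real.sinh (π * x / 2) ^ 3
              - 9 * π ^ 2 / 2 * x ^ 2 * Real.cosh (π * x / 2) * Real.sinh (π * x / 2) ^ 2
              - 5 * π * x * Real.cosh (π * x / 2) ^ 2 * Real.sinh (π * x / 2)
              + 7 * π / 2 * x * Real.sinh (π * x / 2) ^ 3
              + Real.cosh (π * x / 2) * Real.sinh (π * x / 2) ^ 2))
            * (4 * Real.sinh (π * x / 2) ^ 4)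
          - x * (π * (3 * π ^ 2 / 2 * x ^ 2 * Real.cosh (π * x / 2) ^ 3
              - 5 * π ^ 2 / 4 * x ^ 2 * Real.cosh (π * x / 2) * Real.sinh (π * x / 2) ^ 2
              - 3 * π * x * Real.cosh (π * x / 2) ^ 2 * Real.sinh (π * x / 2)
              + 3 * π / 2 * x * Real.sinh (π * x / 2) ^ 3
              + Real.cosh (π * x / 2) * Real.sinh (π * x / 2) ^ 2))
            * (8 * π * Real.sinh (π * x / 2) ^ 3 * Real.cosh (π * x / 2)))
        / (4 * Real.sinh (π * x / 2) ^ 4) ^ 2 := (htop.div hbot hbne).deriv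
  unfold DOp
  show -deriv (fun y : ℝ => y * F3 y) x = F4 x
  rw [show (fun y : ℝ => y * F3 y)
        = fun y : ℝ =>
          y * (π * (3 * π ^ 2 / 2 * y ^ 2 * Real.cosh (π * y / 2) ^ 3
            - 5 * π ^ 2 / 4 * y ^ 2 * Real.cosh (π * y / 2) * Real.sinh (π * y / 2) ^ 2
            - 3 * π * y * Real.cosh (π * y / 2) ^ 2 * Real.sinh (π * y / 2)
            + 3 * π / 2 * y * Real.sinh (π * y / 2) ^ 3
            + Real.cosh (π * y / 2) * Real.sinh (π * y / 2) ^ 2))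
            / (4 * Real.sinh (π * y / 2) ^ 4) from
      funext fun y => by simp only [F3]; ring, hkey]
  simp only [F4]
  field_simp
  ring

private lemma chainD4 :
    (DOp^[4] (fun x : ℝ => 1 / (2 * x * Real.sinh (π * x / 2)))) 2 = F4 2 := by
  set k : ℝ → ℝ := fun x => 1 / (2 * x * Real.sinh (π * x / 2)) with hk
  have e1 : ∀ y, 0 < y → DOp k y = F1 y := stage1
  have e2 : ∀ y, 0 < y → DOp (DOp k) y = F2 y := fun y hy =>
    (DOp_congr e1 hy).trans (stage2 y hy)
  have e3 : ∀ y, 0 < y → DOp (DOp (DOp k)) y = F3 y := fun y hy =>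
    (DOp_congr e2 hy).trans (stage3 y hy)
  have e4 : ∀ y, 0 < y → DOp (DOp (DOp (DOp k))) y = F4 y := fun y hy =>
    (DOp_congr e3 hy).trans (stage4 y hy)
  have hit : DOp^[4] k = DOp (DOp (DOp (DOp k))) := rfl
  rw [hit]
  exact e4 2 (by norm_num)

private lemma exp_lb : (1.15206 : ℝ) ≤ Real.exp 0.141592 := by
  have hb := Real.exp_bound (x := (0.141592 : ℝ))
    (by rw [abs_of_nonneg (by norm_num : (0:ℝ) ≤ 0.141592)]; norm_num)
    (by norm_num : 0 < 4)
  rw [abs_le] at hb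
  have h := hb.1
  rw [abs_of_nonneg (by norm_num : (0:ℝ) ≤ 0.141592)] at h
  simp only [Finset.sum_range_succ, Finset.sum_range_zero] at h
  norm_num [Nat.factorial] at h
  linarith

private lemma exp_ub : Real.exp 0.141593 ≤ (1.152112 : ℝ) := by
  have hb := Real.exp_bound (x := (0.141593 : ℝ))
    (by rw [abs_of_nonneg (by norm_num : (0:ℝ) ≤ 0.141593)]; norm_num)
    (by norm_num : 0 < 4)
  rw [abs_le] at hb
  have h := hb.2
  rw [abs_of_nonneg (by norm_num : (0:ℝ) ≤ 0.141593)] at h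
  simp only [Finset.sum_range_succ, Finset.sum_range_zero] at h
  norm_num [Nat.factorial] at h
  linarith

private lemma E_lb : (23.1395 : ℝ) ≤ Real.exp π := by
  have h1 : Real.exp 3.141592 ≤ Real.exp π := Real.exp_le_exp.mpr Real.pi_gt_d6.le
  have h2 : Real.exp 3.141592 = Real.exp 1 * Real.exp 1 * Real.exp 1 * Real.exp 0.141592 := by
    rw [← Real.exp_add, ← Real.exp_add, ← Real.exp_add]; norm_num
  have h3 := Real.exp_one_gt_d9
  have h4 := exp_lb
  have h5 : (0:ℝ) < Real.exp 1 := Real.exp_pos 1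
  have h6 : (0:ℝ) < Real.exp 0.141592 := Real.exp_pos _
  have h7 : (2.7182818283 : ℝ) * 2.7182818283 ≤ Real.exp 1 * Real.exp 1 := by nlinarith
  have h8 : (2.7182818283 : ℝ) * 2.7182818283 * 2.7182818283
      ≤ Real.exp 1 * Real.exp 1 * Real.exp 1 := by nlinarith
  have h9 : (2.7182818283 : ℝ) * 2.7182818283 * 2.7182818283 * 1.15206
      ≤ Real.exp 1 * Real.exp 1 * Real.exp 1 * Real.exp 0.141592 := by nlinarith
  rw [h2] at h1
  nlinarith [h1, h9]

private lemma E_ub : Real.exp π ≤ (23.1408 : ℝ) := by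
  have h1 : Real.exp π ≤ Real.exp 3.141593 := Real.exp_le_exp.mpr Real.pi_lt_d6.le
  have h2 : Real.exp 3.141593 = Real.exp 1 * Real.exp 1 * Real.exp 1 * Real.exp 0.141593 := by
    rw [← Real.exp_add, ← Real.exp_add, ← Real.exp_add]; norm_num
  have h3 := Real.exp_one_lt_d9
  have h4 := exp_ub
  have h5 : (0:ℝ) < Real.exp 1 := Real.exp_pos 1
  have h6 : (0:ℝ) < Real.exp 0.141593 := Real.exp_pos _
  have h7 : Real.exp 1 * Real.exp 1 ≤ (2.7182818286 : ℝ) * 2.7182818286 := by nlinarith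
  have h8 : Real.exp 1 * Real.exp 1 * Real.exp 1
      ≤ (2.7182818286 : ℝ) * 2.7182818286 * 2.7182818286 := by nlinarith
  have h9 : Real.exp 1 * Real.exp 1 * Real.exp 1 * Real.exp 0.141593
      ≤ (2.7182818286 : ℝ) * 2.7182818286 * 2.7182818286 * 1.152112 := by nlinarith
  rw [h2] at h1
  nlinarith [h1, h9]

private lemma sinh_lb : (11.5481 : ℝ) ≤ Real.sinh π := by
  have h0 : (0:ℝ) < Real.exp π := Real.exp_pos π
  have h1 := E_lb; have h2 := E_ub
  have h3 : Real.exp π * (Real.exp π)⁻¹ = 1 := mul_inv_cancel₀ (ne_of_gt h0)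
  have h4 : (0:ℝ) ≤ (Real.exp π)⁻¹ := by positivity
  rw [Real.sinh_eq, Real.exp_neg]
  nlinarith [h1, h2, h3, h4]

private lemma sinh_ub : Real.sinh π ≤ (11.5488 : ℝ) := by
  have h0 : (0:ℝ) < Real.exp π := Real.exp_pos π
  have h1 := E_lb; have h2 := E_ub
  have h3 : Real.exp π * (Real.exp π)⁻¹ = 1 := mul_inv_cancel₀ (ne_of_gt h0)
  have h4 : (0:ℝ) ≤ (Real.exp π)⁻¹ := by positivity
  rw [Real.sinh_eq, Real.exp_neg]
  nlinarith [h1, h2, h3, h4]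

private lemma cosh_lb : (11.5913 : ℝ) ≤ Real.cosh π := by
  have h0 : (0:ℝ) < Real.exp π := Real.exp_pos π
  have h1 := E_lb; have h2 := E_ub
  have h3 : Real.exp π * (Real.exp π)⁻¹ = 1 := mul_inv_cancel₀ (ne_of_gt h0)
  have h4 : (0:ℝ) ≤ (Real.exp π)⁻¹ := by positivity
  rw [Real.cosh_eq, Real.exp_neg]
  nlinarith [h1, h2, h3, h4]

private lemma cosh_ub : Real.cosh π ≤ (11.5921 : ℝ) := by
  have h0 : (0:ℝ) < Real.exp π := Real.exp_pos π
  have h1 := E_lb; have h2 := E_ub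
  have h3 : Real.exp π * (Real.exp π)⁻¹ = 1 := mul_inv_cancel₀ (ne_of_gt h0)
  have h4 : (0:ℝ) ≤ (Real.exp π)⁻¹ := by positivity
  rw [Real.cosh_eq, Real.exp_neg]
  nlinarith [h1, h2, h3, h4]

/-- for `k_C(x) = 1/(2x·sinh(πx/2))`, one has `(D⁴k_C)(2) < 0`; in
particular `D⁴k_C` is not nonnegative on `(0,∞)`. -/
theorem hyperbolic_cosine_not_in_L3 :
    (DOp^[4] (fun x : ℝ => 1 / (2 * x * Real.sinh (π * x / 2)))) 2 < 0 ∧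
    ¬ ∀ x : ℝ, 0 < x →
        0 ≤ (DOp^[4] (fun x : ℝ => 1 / (2 * x * Real.sinh (π * x / 2)))) x := by
  have hs0 : 0 < Real.sinh π := Real.sinh_pos_iff.mpr Real.pi_pos
  have hc0 : 0 < Real.cosh π := Real.cosh_pos π
  have hsl := sinh_lb; have hsu := sinh_ub
  have hcl := cosh_lb; have hcu := cosh_ub
  have hπl := Real.pi_gt_d6; have hπu := Real.pi_lt_d6
  have hmain : (DOp^[4] (fun x : ℝ => 1 / (2 * x * Real.sinh (π * x / 2)))) 2 < 0 := by
    rw [chainD4]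
    simp only [F4]
    rw [show π * 2 / 2 = π by ring]
    set s := Real.sinh π with hsdef
    set c := Real.cosh π with hcdef
    -- power bounds
    have hs2u : s ^ 2 ≤ 11.5488 ^ 2 := pow_le_pow_left₀ hs0.le hsu 2
    have hs2l : (11.5481 : ℝ) ^ 2 ≤ s ^ 2 := pow_le_pow_left₀ (by norm_num) hsl 2
    have hs3u : s ^ 3 ≤ 11.5488 ^ 3 := pow_le_pow_left₀ hs0.le hsu 3
    have hs3l : (11.5481 : ℝ) ^ 3 ≤ s ^ 3 := pow_le_pow_left₀ (by norm_num) hsl 3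
    have hs4u : s ^ 4 ≤ 11.5488 ^ 4 := pow_le_pow_left₀ hs0.le hsu 4
    have hs4l : (11.5481 : ℝ) ^ 4 ≤ s ^ 4 := pow_le_pow_left₀ (by norm_num) hsl 4
    have hc2u : c ^ 2 ≤ 11.5921 ^ 2 := pow_le_pow_left₀ hc0.le hcu 2
    have hc2l : (11.5913 : ℝ) ^ 2 ≤ c ^ 2 := pow_le_pow_left₀ (by norm_num) hcl 2
    have hc3u : c ^ 3 ≤ 11.5921 ^ 3 := pow_le_pow_left₀ hc0.le hcu 3
    have hc3l : (11.5913 : ℝ) ^ 3 ≤ c ^ 3 := pow_le_pow_left₀ (by norm_num) hcl 3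
    have hc4u : c ^ 4 ≤ 11.5921 ^ 4 := pow_le_pow_left₀ hc0.le hcu 4
    have hp2u : π ^ 2 ≤ 3.141593 ^ 2 := pow_le_pow_left₀ Real.pi_pos.le hπu.le 2
    have hp2l : (3.141592 : ℝ) ^ 2 ≤ π ^ 2 := pow_le_pow_left₀ (by norm_num) hπl.le 2
    have hp3u : π ^ 3 ≤ 3.141593 ^ 3 := pow_le_pow_left₀ Real.pi_pos.le hπu.le 3
    have hp3l : (3.141592 : ℝ) ^ 3 ≤ π ^ 3 := pow_le_pow_left₀ (by norm_num) hπl.le 3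
    -- atom bounds
    have x2u : c ^ 2 * s ^ 2 ≤ 11.5921 ^ 2 * 11.5488 ^ 2 :=
      mul_le_mul hc2u hs2u (pow_nonneg hs0.le 2) (by norm_num)
    have x2l : (11.5913 : ℝ) ^ 2 * 11.5481 ^ 2 ≤ c ^ 2 * s ^ 2 :=
      mul_le_mul hc2l hs2l (by norm_num) (pow_nonneg hc0.le 2)
    have x4l : (11.5913 : ℝ) ^ 3 * 11.5481 ≤ c ^ 3 * s :=
      mul_le_mul hc3l hsl (by norm_num) (pow_nonneg hc0.le 3)
    have x5u : c * s ^ 3 ≤ 11.5921 * 11.5488 ^ 3 :=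
      mul_le_mul hcu hs3u (pow_nonneg hs0.le 3) (by norm_num)
    have x5l : (11.5913 : ℝ) * 11.5481 ^ 3 ≤ c * s ^ 3 :=
      mul_le_mul hcl hs3l (by norm_num) hc0.le
    -- monomial bounds
    have b1 : π ^ 3 * c ^ 4 ≤ 3.141593 ^ 3 * 11.5921 ^ 4 :=
      mul_le_mul hp3u hc4u (pow_nonneg hc0.le 4) (by norm_num)
    have b2 : (3.141592 : ℝ) ^ 3 * (11.5913 ^ 2 * 11.5481 ^ 2) ≤ π ^ 3 * (c ^ 2 * s ^ 2) :=
      mul_le_mul hp3l x2l (by norm_num) (pow_nonneg Real.pi_pos.le 3)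
    have b3 : π ^ 3 * s ^ 4 ≤ 3.141593 ^ 3 * 11.5488 ^ 4 :=
      mul_le_mul hp3u hs4u (pow_nonneg hs0.le 4) (by norm_num)
    have b4 : (3.141592 : ℝ) ^ 2 * (11.5913 ^ 3 * 11.5481) ≤ π ^ 2 * (c ^ 3 * s) :=
      mul_le_mul hp2l x4l (by norm_num) (pow_nonneg Real.pi_pos.le 2)
    have b5 : π ^ 2 * (c * s ^ 3) ≤ 3.141593 ^ 2 * (11.5921 * 11.5488 ^ 3) :=
      mul_le_mul hp2u x5u (mul_nonneg hc0.le (pow_nonneg hs0.le 3)) (by norm_num)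
    have b6 : π * (c ^ 2 * s ^ 2) ≤ 3.141593 * (11.5921 ^ 2 * 11.5488 ^ 2) :=
      mul_le_mul hπu.le x2u
        (mul_nonneg (pow_nonneg hc0.le 2) (pow_nonneg hs0.le 2)) (by norm_num)
    have b7 : (3.141592 : ℝ) * 11.5481 ^ 4 ≤ π * s ^ 4 :=
      mul_le_mul hπl.le hs4l (by norm_num) Real.pi_pos.le
    have hnum : 3 * π ^ 3 * 2 ^ 3 * c ^ 4 - 7 * π ^ 3 / 2 * 2 ^ 3 * c ^ 2 * s ^ 2
        + 5 * π ^ 3 / 8 * 2 ^ 3 * s ^ 4 - 9 * π ^ 2 * 2 ^ 2 * c ^ 3 * s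
        + 15 * π ^ 2 / 2 * 2 ^ 2 * c * s ^ 3 + 7 * π * 2 * c ^ 2 * s ^ 2
        - 7 * π / 2 * 2 * s ^ 4 - c * s ^ 3 < 0 := by
      linarith [b1, b2, b3, b4, b5, b6, b7, x5l]
    have hden : (0:ℝ) < 4 * s ^ 5 := mul_pos (by norm_num) (pow_pos hs0 5)
    exact div_neg_of_neg_of_pos (mul_neg_of_pos_of_neg Real.pi_pos hnum) hden
  exact ⟨hmain, fun h => absurd (h 2 (by norm_num)) (not_le.mpr hmain)⟩
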